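/- Let n ≥ 5 and let R be a weakly PIC algebraic curvature tensor on ℝⁿ. Then for every unit vector e in ℝⁿ, 2·Ric(R)(e,e) ≤ scal(R). -/

import Mathlib

open scoped RealInnerProductSpace

noncomputable section

/-- Euclidean `n`-space. -/
abbrev En (n : ℕ) := EuclideanSpace ℝ (Fin n)

/-- Quadrilinear-form-valued objects (curvature-type tensors), given by their values. -/
abbrev Curv4 (n : ℕ) := En n → En n → En n → En n → ℝ

/-- Bilinear-form-valued objects, given by their values. -/
abbrev Bil (n : ℕ) := En n → En n → ℝ

/-- The standard orthonormal basis vectors of `En n`. -/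
def stdB (n : ℕ) (i : Fin n) : En n := EuclideanSpace.single i 1

/-- `R : Curv4 n` is multilinear, i.e. is the evaluation of a quadrilinear map. -/
def IsMultilinear4 {n : ℕ} (R : Curv4 n) : Prop :=
  ∃ L : En n →ₗ[ℝ] En n →ₗ[ℝ] En n →ₗ[ℝ] En n →ₗ[ℝ] ℝ,
    ∀ x y z w, R x y z w = L x y z w

/-- `R` is an algebraic curvature tensor: a quadrilinear form which is antisymmetric in the
first two arguments, symmetric under exchange of the two pairs, and satisfies the first
Bianchi identity. -/
def IsAlgCurv {n : ℕ} (R : Curv4 n) : Prop :=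
  IsMultilinear4 R ∧
  (∀ x y z w, R x y z w = -R y x z w) ∧
  (∀ x y z w, R x y z w = R z w x y) ∧
  (∀ x y z w, R x y z w + R y z x w + R z x y w = 0)

/-- The Ricci curvature `Ric(R)(x,z) = ∑ₚ R(x,eₚ,z,eₚ)`. -/
def ric {n : ℕ} (R : Curv4 n) : Bil n :=
  fun x z => ∑ p, R x (stdB n p) z (stdB n p)

/-- The scalar curvature `scal(R) = ∑ᵢ Ric(R)(eᵢ,eᵢ)`. -/
def scal {n : ℕ} (R : Curv4 n) : ℝ :=
  ∑ i, ric R (stdB n i) (stdB n i)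

/-- The identity (the standard inner product) as a bilinear form. -/
def idB (n : ℕ) : Bil n := fun x z => ⟪x, z⟫

/-- The trace-free Ricci tensor `Ric₀(R) = Ric(R) - (scal(R)/n)·id`. -/
def ric0 {n : ℕ} (R : Curv4 n) : Bil n :=
  fun x z => ric R x z - scal R / n * ⟪x, z⟫

/-- The square of a bilinear form, viewed as a symmetric endomorphism:
`B²(x,z) = ∑ₚ B(x,eₚ)·B(eₚ,z)`. -/
def bilSq {n : ℕ} (B : Bil n) : Bil n :=
  fun x z => ∑ p, B x (stdB n p) * B (stdB n p) z

/-- The squared Frobenius norm `|B|² = tr(B²)` of a bilinear form. -/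
def bilNormSq {n : ℕ} (B : Bil n) : ℝ :=
  ∑ i, bilSq B (stdB n i) (stdB n i)

/-- The Kulkarni–Nomizu product of two bilinear forms:
`(A ∧ B)(x,y,z,w) = A(x,z)B(y,w) - A(x,w)B(y,z) - A(y,z)B(x,w) + A(y,w)B(x,z)`. -/
def KN {n : ℕ} (A B : Bil n) : Curv4 n :=
  fun x y z w => A x z * B y w - A x w * B y z - A y z * B x w + A y w * B x z

/-- Böhm–Wilking's error term
`D_{a,b}(R) = (2b+(n-2)b²-2a)·Ric₀∧Ric₀ + 2a·Ric∧Ric + 2b²·Ric₀²∧id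
  + ((nb²(1-2b)-2(a-b)(1-2b+nb²))/(n(1+2(n-1)a)))·|Ric₀|²·id∧id`. -/
def Dab {n : ℕ} (a b : ℝ) (R : Curv4 n) : Curv4 n :=
  fun x y z w =>
    (2 * b + ((n : ℝ) - 2) * b ^ 2 - 2 * a) * KN (ric0 R) (ric0 R) x y z w +
      2 * a * KN (ric R) (ric R) x y z w +
      2 * b ^ 2 * KN (bilSq (ric0 R)) (idB n) x y z w +
      ((n : ℝ) * b ^ 2 * (1 - 2 * b) - 2 * (a - b) * (1 - 2 * b + (n : ℝ) * b ^ 2)) /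
          ((n : ℝ) * (1 + 2 * ((n : ℝ) - 1) * a)) * bilNormSq (ric0 R) *
        KN (idB n) (idB n) x y z w

/-- Böhm–Wilking's linear map
`l_{a,b}(R) = R + b·Ric(R)∧id + (1/n)(a-b)·scal(R)·id∧id`. -/
def lab {n : ℕ} (a b : ℝ) (R : Curv4 n) : Curv4 n :=
  fun x y z w =>
    R x y z w + b * KN (ric R) (idB n) x y z w +
      1 / (n : ℝ) * (a - b) * scal R * KN (idB n) (idB n) x y z w

end

open Finset in

lemma comb_lemma {α : Type*} [DecidableEq α] (S : Finset α) (hS : 4 ≤ S.card) (K : α → α → ℝ)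
    (hsym : ∀ a b, K a b = K b a) (hdiag : ∀ a, K a a = 0)
    (hkey : ∀ i j k l, i ≠ j → i ≠ k → i ≠ l → j ≠ k → j ≠ l → k ≠ l →
        0 ≤ K i k + K i l + K j k + K j l) :
    0 ≤ ∑ i ∈ S, ∑ j ∈ S, K i j := by
  classical
  set m : ℕ := S.card with hm
  set r : α → ℝ := fun i => ∑ j ∈ S, K i j with hr
  set T : ℝ := ∑ i ∈ S, r i with hT
  have hm4 : (4:ℝ) ≤ (m:ℝ) := by exact_mod_cast hS
  have hc3 : ((m - 3 : ℕ) : ℝ) = (m:ℝ) - 3 := by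
    rw [Nat.cast_sub (by omega)]; norm_num
  have hc2 : ((m - 2 : ℕ) : ℝ) = (m:ℝ) - 2 := by
    rw [Nat.cast_sub (by omega)]; norm_num
  have hc1 : ((m - 1 : ℕ) : ℝ) = (m:ℝ) - 1 := by
    rw [Nat.cast_sub (by omega)]; norm_num
  have hN : (0:ℝ) ≤ ∑ i ∈ S, ∑ j ∈ S.erase i, ∑ k ∈ (S.erase i).erase j,
      ∑ l ∈ ((S.erase i).erase j).erase k, (K i k + K i l + K j k + K j l) := by
    refine sum_nonneg fun i hi => sum_nonneg fun j hj => sum_nonneg fun k hk =>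
      sum_nonneg fun l hl => ?_
    have hji : j ≠ i := (mem_erase.mp hj).1
    have hkj : k ≠ j := (mem_erase.mp hk).1
    have hki : k ≠ i := (mem_erase.mp (mem_erase.mp hk).2).1
    have hlk : l ≠ k := (mem_erase.mp hl).1
    have hlj : l ≠ j := (mem_erase.mp (mem_erase.mp hl).2).1
    have hli : l ≠ i := (mem_erase.mp (mem_erase.mp (mem_erase.mp hl).2).2).1
    exact hkey i j k l (Ne.symm hji) (Ne.symm hki) (Ne.symm hli) (Ne.symm hkj)
      (Ne.symm hlj) (Ne.symm hlk)
  have hinner : ∀ i ∈ S, ∀ j ∈ S.erase i, ∀ k ∈ (S.erase i).erase j,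
      ∑ l ∈ ((S.erase i).erase j).erase k, (K i k + K i l + K j k + K j l)
        = ((m:ℝ) - 4) * (K i k + K j k) + ((r i - K i j) + (r j - K i j)) := by
    intro i hi j hj k hk
    have hjS : j ∈ S := (mem_erase.mp hj).2
    have hkS : k ∈ S := (mem_erase.mp (mem_erase.mp hk).2).2
    have hcard : (((S.erase i).erase j).erase k).card = m - 3 := by
      rw [card_erase_of_mem hk, card_erase_of_mem hj, card_erase_of_mem hi]
      omega
    have ei : ∑ l ∈ ((S.erase i).erase j).erase k, K i l = r i - K i j - K i k := by
      rw [sum_erase_eq_sub hk, sum_erase_eq_sub hj, sum_erase_eq_sub hi]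
      simp [hr, hdiag]
    have ej : ∑ l ∈ ((S.erase i).erase j).erase k, K j l = r j - K i j - K j k := by
      rw [sum_erase_eq_sub hk, sum_erase_eq_sub hj, sum_erase_eq_sub hi]
      rw [hsym j i]
      simp [hr, hdiag]
    rw [show (fun l => K i k + K i l + K j k + K j l)
        = fun l => (K i k + K j k) + (K i l + K j l) from funext fun l => by ring]
    rw [sum_add_distrib, sum_const, sum_add_distrib, ei, ej, hcard, nsmul_eq_mul, hc3]
    ring
  have hmid : ∀ i ∈ S, ∀ j ∈ S.erase i,
      ∑ k ∈ (S.erase i).erase j,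
        (((m:ℝ) - 4) * (K i k + K j k) + ((r i - K i j) + (r j - K i j)))
      = 2 * ((m:ℝ) - 3) * ((r i - K i j) + (r j - K i j)) := by
    intro i hi j hj
    have hjS : j ∈ S := (mem_erase.mp hj).2
    have hcard : ((S.erase i).erase j).card = m - 2 := by
      rw [card_erase_of_mem hj, card_erase_of_mem hi]
      omega
    have eA : ∑ k ∈ (S.erase i).erase j, K i k = r i - K i j := by
      rw [sum_erase_eq_sub hj, sum_erase_eq_sub hi]; simp [hr, hdiag]
    have eB : ∑ k ∈ (S.erase i).erase j, K j k = r j - K i j := by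
      rw [sum_erase_eq_sub hj, sum_erase_eq_sub hi]
      rw [hsym j i]
      simp [hr, hdiag]
    rw [sum_add_distrib, sum_const, ← mul_sum, sum_add_distrib, eA, eB, hcard,
      nsmul_eq_mul, hc2]
    ring
  have houter : ∀ i ∈ S,
      ∑ j ∈ S.erase i, (2 * ((m:ℝ) - 3) * ((r i - K i j) + (r j - K i j)))
        = 2 * ((m:ℝ) - 3) * (((m:ℝ) - 4) * r i + T) := by
    intro i hi
    have e1 : ∑ j ∈ S.erase i, r j = T - r i := by rw [hT, sum_erase_eq_sub hi]
    have e2 : ∑ j ∈ S.erase i, K i j = r i := by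
      rw [sum_erase_eq_sub hi]; simp [hr, hdiag]
    have hcard : (S.erase i).card = m - 1 := card_erase_of_mem hi
    rw [show (fun j => 2 * ((m:ℝ) - 3) * ((r i - K i j) + (r j - K i j)))
        = fun j => (2 * ((m:ℝ) - 3) * r i) + (2 * ((m:ℝ) - 3) * r j
            - 4 * ((m:ℝ) - 3) * K i j) from funext fun j => by ring]
    rw [sum_add_distrib, sum_const, sum_sub_distrib, ← mul_sum, ← mul_sum, e1, e2, hcard,
      nsmul_eq_mul, hc1]
    ring
  have hNval : ∑ i ∈ S, ∑ j ∈ S.erase i, ∑ k ∈ (S.erase i).erase j,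
      ∑ l ∈ ((S.erase i).erase j).erase k, (K i k + K i l + K j k + K j l)
      = 4 * ((m:ℝ) - 3) * ((m:ℝ) - 2) * T := by
    rw [sum_congr rfl fun i hi => sum_congr rfl fun j hj =>
      sum_congr rfl fun k hk => hinner i hi j hj k hk]
    rw [sum_congr rfl fun i hi => sum_congr rfl fun j hj => hmid i hi j hj]
    rw [sum_congr rfl fun i hi => houter i hi]
    rw [show (fun i => 2 * ((m:ℝ) - 3) * (((m:ℝ) - 4) * r i + T))
        = fun i => (2 * ((m:ℝ) - 3) * ((m:ℝ) - 4)) * r i + 2 * ((m:ℝ) - 3) * T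
        from funext fun i => by ring]
    rw [sum_add_distrib, ← mul_sum, sum_const, nsmul_eq_mul, ← hT, ← hm]
    ring
  rw [hNval] at hN
  by_contra h
  push_neg at h
  have hp : (0:ℝ) < ((m:ℝ) - 3) * ((m:ℝ) - 2) := by nlinarith
  nlinarith [hN, mul_pos hp (neg_pos.mpr h)]
open Finset in
lemma trace_indep {n : ℕ} (b : OrthonormalBasis (Fin n) ℝ (En n))
    (B : En n →ₗ[ℝ] En n →ₗ[ℝ] ℝ) :
    ∑ p, B (b p) (b p) = ∑ i, B (stdB n i) (stdB n i) := by
  classical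
  set u : OrthonormalBasis (Fin n) ℝ (En n) := EuclideanSpace.basisFun (Fin n) ℝ with hu
  have hstd : ∀ i, stdB n i = u i := by
    intro i; simp [stdB, hu, EuclideanSpace.basisFun_apply]
  have hexp : ∀ p, B (b p) (b p)
      = ∑ i, ∑ j, ⟪u i, b p⟫ * ⟪u j, b p⟫ * (B (u j) (u i)) := by
    intro p
    conv_lhs => rw [← u.sum_repr' (b p)]
    simp only [map_sum, LinearMap.sum_apply, map_smul, LinearMap.smul_apply, smul_eq_mul,
      Finset.mul_sum]
    exact Finset.sum_congr rfl fun i _ => Finset.sum_congr rfl fun j _ => by ring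
  rw [sum_congr rfl fun p _ => hexp p, sum_comm]
  rw [sum_congr rfl fun i _ => sum_comm]
  have hinner : ∀ i j, ∑ p, ⟪u i, b p⟫ * ⟪u j, b p⟫ * (B (u j) (u i))
      = ⟪u i, u j⟫ * B (u j) (u i) := by
    intro i j
    rw [← sum_mul]
    congr 1
    rw [← b.sum_inner_mul_inner (u i) (u j)]
    exact Finset.sum_congr rfl fun p _ => by rw [real_inner_comm (u j) (b p)]
  rw [sum_congr rfl fun i _ => sum_congr rfl fun j _ => hinner i j]
  have horth := orthonormal_iff_ite.mp u.orthonormal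
  refine Finset.sum_congr rfl fun i _ => ?_
  rw [sum_congr rfl fun j _ => by rw [horth i j], hstd i]
  simp

/-- for `n ≥ 5`, if `R` is a weakly PIC algebraic curvature tensor on `ℝⁿ`,
then `2·Ric(R)(e,e) ≤ scal(R)` for every unit vector `e`. -/
theorem stmt_17 (n : ℕ) (hn : 5 ≤ n) (R : Curv4 n) (hR : IsAlgCurv R)
    (hPIC : ∀ e₁ e₂ e₃ e₄ : En n, Orthonormal ℝ ![e₁, e₂, e₃, e₄] →
      0 ≤ R e₁ e₃ e₁ e₃ + R e₁ e₄ e₁ e₄ + R e₂ e₃ e₂ e₃ + R e₂ e₄ e₂ e₄ -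
        2 * R e₁ e₂ e₃ e₄) :
    ∀ e : En n, ‖e‖ = 1 → 2 * ric R e e ≤ scal R := by
  classical
  intro e he
  haveI : NeZero n := ⟨by omega⟩
  obtain ⟨⟨L, hL⟩, h12, h13, _⟩ := hR
  -- antisymmetry in the last two arguments
  have h34 : ∀ x y z w, R x y w z = -R x y z w := by
    intro x y z w
    rw [h13 x y w z, h12 w z x y, ← h13 x y z w]
  -- extend e to an orthonormal basis
  have hone : Orthonormal ℝ (Set.restrict {(0 : Fin n)} (fun _ => e)) := by
    constructor
    · intro i; exact he
    · intro i j hij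
      exact absurd (Subtype.ext ((i.2 : (i : Fin n) ∈ ({0} : Set (Fin n)))
        |>.trans ((j.2 : (j : Fin n) ∈ ({0} : Set (Fin n)))).symm)) hij
  obtain ⟨b, hb⟩ := hone.exists_orthonormalBasis_extension_of_card_eq
    (by simp [finrank_euclideanSpace_fin])
  have hb0 : b 0 = e := hb 0 rfl
  set K : Fin n → Fin n → ℝ := fun i j => R (b i) (b j) (b i) (b j) with hK
  have Kdiag : ∀ i, K i i = 0 := by
    intro i
    have := h12 (b i) (b i) (b i) (b i)
    simp only [hK]
    linarith
  have Ksym : ∀ i j, K i j = K j i := by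
    intro i j
    simp only [hK]
    rw [h12 (b j) (b i) (b j) (b i), h34 (b i) (b j) (b j) (b i)]
  -- orthonormal four-frames from the basis
  have hframe : ∀ i j k l : Fin n, i ≠ j → i ≠ k → i ≠ l → j ≠ k → j ≠ l → k ≠ l →
      Orthonormal ℝ ![b i, b j, b k, b l] := by
    intro i j k l hij hik hil hjk hjl hkl
    have heq : ![b i, b j, b k, b l] = b ∘ ![i, j, k, l] := by
      funext a; fin_cases a <;> rfl
    rw [heq]
    refine b.orthonormal.comp _ ?_
    intro a c hac
    fin_cases a <;> fin_cases c <;>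
      simp only [Matrix.cons_val_zero, Matrix.cons_val_one, Matrix.head_cons,
        Matrix.cons_val_two, Matrix.tail_cons, Matrix.cons_val_three] at hac <;>
      first
        | rfl
        | exact absurd hac hij | exact absurd hac hik | exact absurd hac hil
        | exact absurd hac hjk | exact absurd hac hjl | exact absurd hac hkl
        | exact absurd hac.symm hij | exact absurd hac.symm hik | exact absurd hac.symm hil
        | exact absurd hac.symm hjk | exact absurd hac.symm hjl | exact absurd hac.symm hkl
  have hkey : ∀ i j k l : Fin n, i ≠ j → i ≠ k → i ≠ l → j ≠ k → j ≠ l → k ≠ l →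
      0 ≤ K i k + K i l + K j k + K j l := by
    intro i j k l hij hik hil hjk hjl hkl
    have h1 := hPIC (b i) (b j) (b k) (b l) (hframe i j k l hij hik hil hjk hjl hkl)
    have h2 := hPIC (b i) (b j) (b l) (b k)
      (hframe i j l k hij hil hik hjl hjk (Ne.symm hkl))
    rw [h34 (b i) (b j) (b k) (b l)] at h2
    simp only [hK]
    linarith
  -- trace lemmas
  have tr1 : ∀ x z : En n, ∑ p, L x (b p) z (b p) = ∑ p, L x (stdB n p) z (stdB n p) := by
    intro x z
    have := trace_indep b (LinearMap.mk₂ ℝ (fun y w => L x y z w)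
      (fun m₁ m₂ w => by simp) (fun c m w => by simp)
      (fun y m₁ m₂ => by simp) (fun c y m => by simp))
    simpa using this
  have tr2 : ∀ y w : En n, ∑ p, L (b p) y (b p) w = ∑ p, L (stdB n p) y (stdB n p) w := by
    intro y w
    have := trace_indep b (LinearMap.mk₂ ℝ (fun x z => L x y z w)
      (fun m₁ m₂ z => by simp) (fun c m z => by simp)
      (fun x m₁ m₂ => by simp) (fun c x m => by simp))
    simpa using this
  -- ric in terms of the basis b
  have hric : ric R e e = ∑ p, K 0 p := by
    have : ric R e e = ∑ p, L e (stdB n p) e (stdB n p) := by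
      simp only [ric, hL]
    rw [this, ← tr1 e e]
    simp only [hK, hL, hb0]
  -- scal in terms of the basis b
  have hscal : scal R = ∑ i, ∑ p, K i p := by
    have h1 : scal R = ∑ i, ∑ p, L (stdB n i) (stdB n p) (stdB n i) (stdB n p) := by
      simp only [scal, ric, hL]
    rw [h1]
    have h2 : ∀ i : Fin n, ∑ p, L (stdB n i) (stdB n p) (stdB n i) (stdB n p)
        = ∑ p, L (stdB n i) (b p) (stdB n i) (b p) := fun i => (tr1 _ _).symm
    rw [Finset.sum_congr rfl fun i _ => h2 i, Finset.sum_comm]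
    have h3 : ∀ p : Fin n, ∑ i, L (stdB n i) (b p) (stdB n i) (b p)
        = ∑ i, L (b i) (b p) (b i) (b p) := fun p => (tr2 _ _).symm
    rw [Finset.sum_congr rfl fun p _ => h3 p, Finset.sum_comm]
    simp only [hK, hL]
  -- split off index 0
  set S : Finset (Fin n) := Finset.univ.erase 0 with hS
  have hScard : 4 ≤ S.card := by
    rw [hS, Finset.card_erase_of_mem (Finset.mem_univ 0), Finset.card_univ, Fintype.card_fin]
    omega
  have hrow : ∀ i : Fin n, ∑ p, K i p = K i 0 + ∑ p ∈ S, K i p := by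
    intro i
    rw [hS, Finset.add_sum_erase _ _ (Finset.mem_univ 0)]
  have hcol : ∑ i ∈ S, K i 0 = ∑ p, K 0 p := by
    have : ∑ i ∈ S, K i 0 = ∑ i ∈ S, K 0 i := Finset.sum_congr rfl fun i _ => Ksym i 0
    rw [this, hS, Finset.sum_erase_eq_sub (Finset.mem_univ 0), Kdiag]
    ring
  have hsplit : (∑ i, ∑ p, K i p) = 2 * (∑ p, K 0 p) + ∑ i ∈ S, ∑ p ∈ S, K i p := by
    rw [← Finset.add_sum_erase _ _ (Finset.mem_univ (0 : Fin n)), ← hS]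
    rw [Finset.sum_congr rfl fun i (_ : i ∈ S) => hrow i, Finset.sum_add_distrib, hcol,
      hrow 0, Kdiag]
    ring
  have hcomb := comb_lemma S hScard K Ksym Kdiag hkey
  rw [hric, hscal, hsplit]
  linarith
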